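/- Given an operator c on FP-soft sets over X satisfying the Kuratowski closure axioms (c(F_∅) = F_∅; F_A ⊆̃ c(F_A); c(F_A ∪̃ F_B) = c(F_A) ∪̃ c(F_B); c(c(F_A)) = c(F_A)), the family τ = {F_A^c : c(F_A) = F_A} is an FP-soft topology on X, and the FP-soft closure with respect to τ coincides with c, i.e., cl_τ(F_A) = c(F_A) for every FP-soft set F_A. -/
import Mathlib


open Set unitInterval

instance : Fact ((0:ℝ) ≤ 1) := ⟨zero_le_one⟩

noncomputable section

structure FPSoft (X E : Type*) where
  mu : E → unitInterval
  app : E → Set X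

namespace FPSoft
variable {X Y E K : Type*}

/-- FP-soft subset relation. -/
def Subset (F G : FPSoft X E) : Prop := ∀ e, F.mu e ≤ G.mu e ∧ F.app e ⊆ G.app e

/-- Complement of an FP-soft set. -/
def compl (F : FPSoft X E) : FPSoft X E := ⟨fun e => σ (F.mu e), fun e => (F.app e)ᶜ⟩

def inter (F G : FPSoft X E) : FPSoft X E :=
  ⟨fun e => F.mu e ⊓ G.mu e, fun e => F.app e ∩ G.app e⟩

def union (F G : FPSoft X E) : FPSoft X E :=
  ⟨fun e => F.mu e ⊔ G.mu e, fun e => F.app e ∪ G.app e⟩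

def iUnion {ι : Type*} (F : ι → FPSoft X E) : FPSoft X E :=
  ⟨fun e => ⨆ i, (F i).mu e, fun e => ⋃ i, (F i).app e⟩

def iInter {ι : Type*} (F : ι → FPSoft X E) : FPSoft X E :=
  ⟨fun e => ⨅ i, (F i).mu e, fun e => ⋂ i, (F i).app e⟩

def sUnion (S : Set (FPSoft X E)) : FPSoft X E :=
  ⟨fun e => ⨆ F ∈ S, F.mu e, fun e => ⋃ F ∈ S, F.app e⟩

def sInter (S : Set (FPSoft X E)) : FPSoft X E :=
  ⟨fun e => ⨅ F ∈ S, F.mu e, fun e => ⋂ F ∈ S, F.app e⟩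

/-- The empty FP-soft set. -/
def empty : FPSoft X E := ⟨fun _ => 0, fun _ => ∅⟩

/-- The universal FP-soft set. -/
def univ : FPSoft X E := ⟨fun _ => 1, fun _ => Set.univ⟩

/-- FP-soft quasi-coincidence. -/
def Quasi (F G : FPSoft X E) : Prop :=
  ∃ e, 1 < (F.mu e : ℝ) + (G.mu e : ℝ) ∨ (F.app e ∩ G.app e).Nonempty

/-- The FP-soft point with parameter `e`, value `α` and set `f` belongs to `F`. -/
def ptMem (e : E) (α : unitInterval) (f : Set X) (F : FPSoft X E) : Prop :=
  α ≤ F.mu e ∧ f ⊆ F.app e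

/-- The FP-soft point with parameter `e`, value `α` and set `f` is quasi-coincident with `F`. -/
def ptQuasi (e : E) (α : unitInterval) (f : Set X) (F : FPSoft X E) : Prop :=
  1 < (α : ℝ) + (F.mu e : ℝ) ∨ (f ∩ F.app e).Nonempty

/-- Image of an FP-soft set under the FP-soft mapping induced by `u` and `p`. -/
def image (u : X → Y) (p : E → K) (F : FPSoft X E) : FPSoft Y K :=
  ⟨fun k => ⨆ e ∈ p ⁻¹' {k}, F.mu e, fun k => ⋃ e ∈ p ⁻¹' {k}, u '' F.app e⟩

/-- Preimage of an FP-soft set under the FP-soft mapping induced by `u` and `p`. -/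
def preimage (u : X → Y) (p : E → K) (G : FPSoft Y K) : FPSoft X E :=
  ⟨fun e => G.mu (p e), fun e => u ⁻¹' G.app (p e)⟩

/-- `τ` is an FP-soft topology. -/
def IsTopology (τ : Set (FPSoft X E)) : Prop :=
  empty ∈ τ ∧ univ ∈ τ ∧ (∀ F ∈ τ, ∀ G ∈ τ, inter F G ∈ τ) ∧ (∀ S ⊆ τ, sUnion S ∈ τ)

/-- `F` is FP-soft closed with respect to `τ`. -/
def IsClosed (τ : Set (FPSoft X E)) (F : FPSoft X E) : Prop := compl F ∈ τ

/-- FP-soft closure: intersection of all FP-soft closed supersets. -/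
def closure (τ : Set (FPSoft X E)) (F : FPSoft X E) : FPSoft X E :=
  sInter {G | IsClosed τ G ∧ Subset F G}

/-- FP-soft interior: union of all FP-soft open subsets. -/
def interior (τ : Set (FPSoft X E)) (F : FPSoft X E) : FPSoft X E :=
  sUnion {G | G ∈ τ ∧ Subset G F}

end FPSoft

section Aux
variable {X E : Type*}

namespace FPSoft

lemma subset_antisymm' {F G : FPSoft X E} (h1 : Subset F G) (h2 : Subset G F) : F = G := by
  cases F; cases G
  simp only [mk.injEq]
  constructor
  · funext e; exact le_antisymm (h1 e).1 (h2 e).1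
  · funext e; exact Set.Subset.antisymm (h1 e).2 (h2 e).2

lemma compl_compl' (F : FPSoft X E) : compl (compl F) = F := by
  cases F
  simp [compl, unitInterval.symm_symm]

lemma subset_univ (F : FPSoft X E) : Subset F univ :=
  fun _ => ⟨le_one _, Set.subset_univ _⟩

lemma union_eq_right {F G : FPSoft X E} (h : Subset F G) : union F G = G := by
  cases G
  simp only [union, mk.injEq]
  exact ⟨funext fun e => sup_eq_right.2 (h e).1, funext fun e => Set.union_eq_self_of_subset_left (h e).2⟩

lemma subset_union_left (F G : FPSoft X E) : Subset F (union F G) :=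
  fun e => ⟨le_sup_left, Set.subset_union_left⟩

lemma symm_iSup {ι : Sort*} (f : ι → unitInterval) : σ (⨆ i, f i) = ⨅ i, σ (f i) := by
  apply le_antisymm
  · exact le_iInf fun i => unitInterval.symm_le_symm.2 (le_iSup f i)
  · rw [unitInterval.le_symm_comm]
    exact iSup_le fun i => unitInterval.le_symm_comm.1 (iInf_le _ i)

end FPSoft


namespace FPSoft

lemma symm_sup (a b : unitInterval) : σ (a ⊔ b) = σ a ⊓ σ b := by
  rcases le_total a b with h | h
  · rw [sup_eq_right.2 h, inf_eq_right.2 (unitInterval.symm_le_symm.2 h)]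
  · rw [sup_eq_left.2 h, inf_eq_left.2 (unitInterval.symm_le_symm.2 h)]

lemma symm_iInf {ι : Sort*} (f : ι → unitInterval) : σ (⨅ i, f i) = ⨆ i, σ (f i) := by
  have h := symm_iSup (fun i => σ (f i))
  simp only [unitInterval.symm_symm] at h
  rw [← h, unitInterval.symm_symm]

end FPSoft

end Aux

theorem fp_closure_operator_topology {X E : Type*} (c : FPSoft X E → FPSoft X E)
    (hc1 : c FPSoft.empty = FPSoft.empty)
    (hc2 : ∀ F : FPSoft X E, FPSoft.Subset F (c F))
    (hc3 : ∀ F G : FPSoft X E, c (FPSoft.union F G) = FPSoft.union (c F) (c G))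
    (hc4 : ∀ F : FPSoft X E, c (c F) = c F) :
    FPSoft.IsTopology {G : FPSoft X E | ∃ F, c F = F ∧ G = FPSoft.compl F} ∧
      ∀ F : FPSoft X E,
        FPSoft.closure {G : FPSoft X E | ∃ F, c F = F ∧ G = FPSoft.compl F} F = c F := by
  
  classical
  set τ := {G : FPSoft X E | ∃ F, c F = F ∧ G = FPSoft.compl F} with hτ
  have mono : ∀ {F G : FPSoft X E}, FPSoft.Subset F G → FPSoft.Subset (c F) (c G) := by
    intro F G h
    have h2 : c G = FPSoft.union (c F) (c G) := by
      rw [← hc3, FPSoft.union_eq_right h]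
    rw [h2]
    exact FPSoft.subset_union_left _ _
  have cuniv : c FPSoft.univ = FPSoft.univ :=
    FPSoft.subset_antisymm' (FPSoft.subset_univ _) (hc2 _)
  have key : ∀ G : FPSoft X E, FPSoft.compl G ∈ τ ↔ c G = G := by
    intro G
    constructor
    · rintro ⟨F, hF, hGF⟩
      have : G = F := by
        have := congrArg FPSoft.compl hGF
        rwa [FPSoft.compl_compl', FPSoft.compl_compl'] at this
      rw [this]; exact hF
    · intro h; exact ⟨G, h, rfl⟩
  have sInter_mem : ∀ {S : Set (FPSoft X E)} {G}, G ∈ S → FPSoft.Subset (FPSoft.sInter S) G :=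
    fun {S G} h e => ⟨iInf₂_le G h, Set.biInter_subset_of_mem h⟩
  have subset_sInter : ∀ {S : Set (FPSoft X E)} {H}, (∀ G ∈ S, FPSoft.Subset H G) →
      FPSoft.Subset H (FPSoft.sInter S) :=
    fun {S H} h e => ⟨le_iInf₂ fun G hG => (h G hG e).1, Set.subset_iInter₂ fun G hG => (h G hG e).2⟩
  refine ⟨⟨⟨FPSoft.univ, cuniv, ?_⟩, ⟨FPSoft.empty, hc1, ?_⟩, ?_, ?_⟩, ?_⟩
  · simp [FPSoft.empty, FPSoft.univ, FPSoft.compl, unitInterval.symm_one]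
  · simp [FPSoft.empty, FPSoft.univ, FPSoft.compl, unitInterval.symm_zero]
  · rintro G1 ⟨F1, hF1, rfl⟩ G2 ⟨F2, hF2, rfl⟩
    refine ⟨FPSoft.union F1 F2, by rw [hc3, hF1, hF2], ?_⟩
    simp only [FPSoft.inter, FPSoft.compl, FPSoft.union, FPSoft.mk.injEq]
    exact ⟨funext fun e => (FPSoft.symm_sup _ _).symm,
      funext fun e => (Set.compl_union _ _).symm⟩
  · intro S hS
    set T : Set (FPSoft X E) := FPSoft.compl '' S with hT
    have hfix : ∀ F ∈ T, c F = F := by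
      rintro F ⟨G, hG, rfl⟩
      obtain ⟨F', hF', rfl⟩ := hS hG
      rw [FPSoft.compl_compl']; exact hF'
    have hcfix : c (FPSoft.sInter T) = FPSoft.sInter T := by
      refine FPSoft.subset_antisymm' ?_ (hc2 _)
      refine subset_sInter fun G hG => ?_
      have := mono (sInter_mem hG)
      rwa [hfix G hG] at this
    refine ⟨FPSoft.sInter T, hcfix, ?_⟩
    simp only [FPSoft.sUnion, FPSoft.sInter, FPSoft.compl, FPSoft.mk.injEq, hT]
    constructor
    · funext e
      rw [iInf_image]
      simp [FPSoft.symm_iInf, FPSoft.compl, unitInterval.symm_symm]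
    · funext e
      rw [Set.biInter_image]
      simp [Set.compl_iInter, FPSoft.compl]
  · intro F
    have hmem : c F ∈ {G | FPSoft.IsClosed τ G ∧ FPSoft.Subset F G} :=
      ⟨(key (c F)).2 (hc4 F), hc2 F⟩
    refine FPSoft.subset_antisymm' (sInter_mem hmem) (subset_sInter ?_)
    rintro G ⟨hGc, hFG⟩
    have hG : c G = G := (key G).1 hGc
    have := mono hFG
    rwa [hG] at this
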